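/- Every finite word of length exactly 2^m over Fin m contains a bad j-pair for some j, and 2^m is optimal: the word w_{m-1} of length 2^m - 1 contains no bad j-pair for any j. Hence the minimal length L(m) such that every word over Fin m of length L(m) contains a bad j-pair equals 2^m. -/

import Mathlib

def badWord : ℕ → List ℕ
  | 0 => [0]
  | j + 1 => badWord j ++ [j + 1] ++ badWord j

lemma badWord_length (j : ℕ) : (badWord j).length = 2 ^ (j + 1) - 1 := by
  induction j with
  | zero => simp [badWord]
  | succ j ih =>
    simp only [badWord, List.length_append, List.length_singleton, ih]
    have : 1 ≤ 2 ^ (j + 1) := Nat.one_le_two_pow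
    have h2 : 2 ^ (j + 2) = 2 ^ (j + 1) + 2 ^ (j + 1) := by ring
    omega

lemma badWord_mem_le (j : ℕ) : ∀ a ∈ badWord j, a ≤ j := by
  induction j with
  | zero => simp [badWord]
  | succ j ih =>
    intro a ha
    simp only [badWord, List.mem_append, List.mem_singleton] at ha
    rcases ha with (ha | rfl) | ha
    · exact (ih a ha).trans (Nat.le_succ j)
    · exact le_refl _
    · exact (ih a ha).trans (Nat.le_succ j)

lemma badWord_getD_le (j i : ℕ) : (badWord j).getD i 0 ≤ j := by
  by_cases h : i < (badWord j).length
  · rw [List.getD_eq_getElem _ _ h]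
    exact badWord_mem_le j _ (List.getElem_mem h)
  · rw [List.getD_eq_default _ _ (le_of_not_gt h)]
    exact Nat.zero_le _

lemma badWord_noBad (j : ℕ) : ∀ i i' v, i < i' → i' < (badWord j).length →
    (badWord j).getD i 0 = v → (badWord j).getD i' 0 = v →
    (∀ i'', i < i'' → i'' < i' → (badWord j).getD i'' 0 < v) → False := by
  induction j with
  | zero =>
    intro i i' v h1 h2 _ _ _
    simp [badWord] at h2
    omega
  | succ j ih =>
    intro i i' v h1 h2 hvi hvi' hmid
    set L := (badWord j).length with hL
    have hw : badWord (j + 1) = (badWord j ++ [j + 1]) ++ badWord j := by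
      simp [badWord]
    have hlen : (badWord (j + 1)).length = L + 1 + L := by
      simp only [hw, List.length_append, List.length_singleton]
      rfl
    -- getD facts
    have hleft : ∀ k, k < L → (badWord (j + 1)).getD k 0 = (badWord j).getD k 0 := by
      intro k hk
      rw [hw, List.getD_append _ _ _ _ (by simp only [List.length_append, List.length_singleton]; omega),
        List.getD_append _ _ _ _ hk]
    have hmidv : (badWord (j + 1)).getD L 0 = j + 1 := by
      rw [hw, List.getD_append _ _ _ _ (by simp only [List.length_append, List.length_singleton]; omega),
        List.getD_append_right _ _ _ _ (le_refl L)]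
      simp [hL]
    have hright : ∀ k, L < k → (badWord (j + 1)).getD k 0
        = (badWord j).getD (k - (L + 1)) 0 := by
      intro k hk
      rw [hw, List.getD_append_right _ _ _ _ (by simp only [List.length_append, List.length_singleton]; omega)]
      congr 1
      simp [List.length_append, hL]
    rw [hlen] at h2
    rcases lt_trichotomy i' L with hi' | hi' | hi'
    · -- both in left copy
      refine ih i i' v h1 hi' ?_ ?_ ?_
      · rw [← hleft i (h1.trans hi')]; exact hvi
      · rw [← hleft i' hi']; exact hvi'
      · intro k hk1 hk2
        rw [← hleft k (hk2.trans hi')]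
        exact hmid k hk1 hk2
    · -- i' = L : v = j+1 but value at i ≤ j
      rw [hi', hmidv] at hvi'
      have := badWord_getD_le j i
      rw [← hleft i (by omega), hvi] at this
      omega
    · rcases lt_trichotomy i L with hi | hi | hi
      · -- i < L < i' : middle letter j+1 must be < v ≤ j
        have h3 := hmid L hi hi'
        rw [hmidv] at h3
        have h4 := badWord_getD_le j (i' - (L + 1))
        rw [← hright i' hi', hvi'] at h4
        omega
      · -- i = L : v = j+1 but value at i' ≤ j
        rw [hi, hmidv] at hvi
        have h4 := badWord_getD_le j (i' - (L + 1))
        rw [← hright i' hi', hvi'] at h4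
        omega
      · -- both in right copy
        refine ih (i - (L + 1)) (i' - (L + 1)) v (by omega) (by omega) ?_ ?_ ?_
        · rw [← hright i hi]; exact hvi
        · rw [← hright i' hi']; exact hvi'
        · intro k hk1 hk2
          have := hmid (k + (L + 1)) (by omega) (by omega)
          rw [hright (k + (L + 1)) (by omega)] at this
          simpa using this

lemma existsBad : ∀ (m a : ℕ) (x : ℕ → ℕ), (∀ i, a ≤ i → i < a + 2 ^ m → x i < m) →
    ∃ j i i', a ≤ i ∧ i < i' ∧ i' < a + 2 ^ m ∧ x i = j ∧ x i' = j ∧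
      ∀ i'', i < i'' → i'' < i' → x i'' < j := by
  intro m
  induction m with
  | zero =>
    intro a x h
    exact absurd (h a (le_refl a) (by simp)) (Nat.not_lt_zero _)
  | succ m ih =>
    intro a x h
    have hpow : 2 ^ (m + 1) = 2 ^ m + 2 ^ m := by ring
    by_cases htwo : ∃ p q, a ≤ p ∧ p < q ∧ q < a + 2 ^ (m + 1) ∧ x p = m ∧ x q = m
    · obtain ⟨p, q, hap, hpq, hq, hxp, hxq⟩ := htwo
      have hex : ∃ q', p < q' ∧ q' < a + 2 ^ (m + 1) ∧ x q' = m := ⟨q, hpq, hq, hxq⟩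
      classical
      obtain ⟨hq1, hq2, hq3⟩ := Nat.find_spec hex
      refine ⟨m, p, Nat.find hex, hap, hq1, hq2, hxp, hq3, ?_⟩
      intro k hk1 hk2
      have hlt : x k < m + 1 := h k (by omega) (by omega)
      have hne : x k ≠ m := fun hkm => Nat.find_min hex hk2 ⟨hk1, by omega, hkm⟩
      omega
    · push_neg at htwo
      by_cases hone : ∃ p, a ≤ p ∧ p < a + 2 ^ m ∧ x p = m
      · obtain ⟨p, hap, hp2, hxp⟩ := hone
        have hb : ∀ i, p + 1 ≤ i → i < p + 1 + 2 ^ m → x i < m := by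
          intro i h1 h2
          have hlt : x i < m + 1 := h i (by omega) (by omega)
          have hne : x i ≠ m := fun hxi =>
            absurd (htwo p i hap (by omega) (by omega) hxp) (fun c => c hxi)
          omega
        obtain ⟨j, i, i', h1, h2, h3, h4, h5, h6⟩ := ih (p + 1) x hb
        exact ⟨j, i, i', by omega, h2, by omega, h4, h5, h6⟩
      · push_neg at hone
        have hb : ∀ i, a ≤ i → i < a + 2 ^ m → x i < m := by
          intro i h1 h2
          have hlt : x i < m + 1 := h i h1 (by omega)
          have hne : x i ≠ m := hone i h1 h2
          omega
        obtain ⟨j, i, i', h1, h2, h3, h4, h5, h6⟩ := ih a x hb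
        exact ⟨j, i, i', h1, h2, by omega, h4, h5, h6⟩

theorem bad_pair_threshold (m : ℕ) (hm : 1 ≤ m) :
    (∀ x : ℕ → Fin m, ∃ (j : Fin m) (i i' : ℕ), i < i' ∧ i' < 2 ^ m ∧
        x i = j ∧ x i' = j ∧ ∀ i'', i < i'' → i'' < i' → x i'' < j) ∧
    ((badWord (m - 1)).length = 2 ^ m - 1 ∧
      ¬ ∃ i i' j, i < i' ∧ i' < (badWord (m - 1)).length ∧
        (badWord (m - 1)).getD i 0 = j ∧ (badWord (m - 1)).getD i' 0 = j ∧
        ∀ i'', i < i'' → i'' < i' → (badWord (m - 1)).getD i'' 0 < j) ∧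
    IsLeast {L : ℕ | ∀ x : ℕ → Fin m, ∃ (j : Fin m) (i i' : ℕ), i < i' ∧ i' < L ∧
        x i = j ∧ x i' = j ∧ ∀ i'', i < i'' → i'' < i' → x i'' < j} (2 ^ m) := by
  have key : ∀ x : ℕ → Fin m, ∃ (j : Fin m) (i i' : ℕ), i < i' ∧ i' < 2 ^ m ∧
      x i = j ∧ x i' = j ∧ ∀ i'', i < i'' → i'' < i' → x i'' < j := by
    intro x
    obtain ⟨j, i, i', _, h2, h3, h4, h5, h6⟩ :=
      existsBad m 0 (fun i => (x i : ℕ)) (fun i _ _ => (x i).isLt)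
    have hjm : j < m := h4 ▸ (x i).isLt
    refine ⟨⟨j, hjm⟩, i, i', h2, by omega, ?_, ?_, ?_⟩
    · exact Fin.ext h4
    · exact Fin.ext h5
    · intro k hk1 hk2
      exact h6 k hk1 hk2
  have hlen : (badWord (m - 1)).length = 2 ^ m - 1 := by
    rw [badWord_length]
    congr 2
    omega
  refine ⟨key, ⟨?_, ?_⟩, key, ?_⟩
  · exact hlen
  · rintro ⟨i, i', j, h1, h2, h3, h4, h5⟩
    exact badWord_noBad (m - 1) i i' j h1 h2 h3 h4 h5
  · intro L hL
    by_contra hc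
    push_neg at hc
    have hx : ∀ i, (badWord (m - 1)).getD i 0 < m := by
      intro i
      have := badWord_getD_le (m - 1) i
      omega
    obtain ⟨j, i, i', h1, h2, h3, h4, h5⟩ :=
      hL (fun i => ⟨(badWord (m - 1)).getD i 0, hx i⟩)
    have h2' : i' < (badWord (m - 1)).length := by
      rw [hlen]; omega
    refine badWord_noBad (m - 1) i i' (j : ℕ) h1 h2' ?_ ?_ ?_
    · exact congrArg Fin.val h3
    · exact congrArg Fin.val h4
    · intro k hk1 hk2
      exact h5 k hk1 hk2
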